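/- Let d ≥ 1, n ≥ 1, A ∈ ℝ^{d×n} and u ∈ ℝⁿ. The set X*_u of global minimizers of L(x,u) = (1/2)‖Ax‖₂² + ⟨u,x⟩ over the unit sphere { x : ‖x‖₂ = 1 } is a (possibly degenerate) sphere of dimension at most n: there exist a point p ∈ ℝⁿ, a linear subspace V ⊆ ℝⁿ, and a radius r ≥ 0 such that X*_u = { p + w : w ∈ V, ‖w‖₂ = r }. -/

import Mathlib

open scoped RealInnerProductSpace

/-- The Lagrangian `L(x,u) = (1/2)‖Ax‖₂² + ⟨u,x⟩`. -/
noncomputable def lagrangian {d n : ℕ} (A : Matrix (Fin d) (Fin n) ℝ)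
    (x u : EuclideanSpace ℝ (Fin n)) : ℝ :=
  (1 / 2) * ‖Matrix.toEuclideanLin A x‖ ^ 2 + ⟪u, x⟫

section Aux

set_option linter.unusedSectionVars false
set_option linter.unusedVariables false
set_option maxHeartbeats 1000000

variable {E F : Type*} [NormedAddCommGroup E] [InnerProductSpace ℝ E]
  [NormedAddCommGroup F] [InnerProductSpace ℝ F]
  [FiniteDimensional ℝ E] [FiniteDimensional ℝ F]

lemma aux_le_zero (c K : ℝ) (hK : 0 ≤ K) (h : ∀ t : ℝ, 0 < t → t ≤ 1 → c ≤ K * t) : c ≤ 0 := by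
  by_contra hc
  push_neg at hc
  have ht0 : 0 < c / (K + c) := div_pos hc (by linarith)
  have ht1 : c / (K + c) ≤ 1 := by rw [div_le_one (by linarith)]; linarith
  have h1 := h _ ht0 ht1
  have hq : c / (K + c) * (K + c) = c := div_mul_cancel₀ c (by linarith)
  nlinarith [h1, hq, hc, hK]

lemma keyIneq (T : E →ₗ[ℝ] F) (u x : E)
    (hmin : ∀ y, ‖y‖ = 1 → (1/2) * ‖T x‖^2 + ⟪u, x⟫ ≤ (1/2) * ‖T y‖^2 + ⟪u, y⟫)
    (h : E) (hc : ‖x + h‖ = 1) :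
    0 ≤ ⟪T x, T h⟫ + ⟪u, h⟫ + (1/2) * ⟪T h, T h⟫ := by
  have h1 := hmin (x + h) hc
  have h2 : ‖T (x + h)‖^2 = ‖T x‖^2 + 2*⟪T x, T h⟫ + ‖T h‖^2 := by
    rw [map_add]; exact norm_add_sq_real _ _
  have h3 : ⟪u, x + h⟫ = ⟪u, x⟫ + ⟪u, h⟫ := inner_add_right u x h
  have h4 : ⟪T h, T h⟫ = ‖T h‖^2 := real_inner_self_eq_norm_sq _
  rw [h2, h3] at h1
  linarith

lemma constraintEq (x h : E) (hx : ‖x‖ = 1) (hc : ‖x + h‖ = 1) :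
    2 * ⟪x, h⟫ + ⟪h, h⟫ = 0 := by
  have h1 : ‖x + h‖^2 = ‖x‖^2 + 2*⟪x,h⟫ + ‖h‖^2 := norm_add_sq_real x h
  have h4 : ⟪h, h⟫ = ‖h‖^2 := real_inner_self_eq_norm_sq _
  rw [hx, hc] at h1
  linarith

lemma firstOrder (T : E →ₗ[ℝ] F) (u x : E) (hx : ‖x‖ = 1)
    (hmin : ∀ y, ‖y‖ = 1 → (1/2)*‖T x‖^2 + ⟪u,x⟫ ≤ (1/2)*‖T y‖^2 + ⟪u,y⟫) :
    ∀ z : E, ⟪T x, T z⟫ + ⟪u, z⟫ = (⟪T x, T x⟫ + ⟪u, x⟫) * ⟪x, z⟫ := by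
  obtain ⟨C, hC0, hCb⟩ : ∃ C : ℝ, 0 ≤ C ∧ ∀ a : E, ‖T a‖ ≤ C * ‖a‖ :=
    ⟨‖T.toContinuousLinearMap‖, norm_nonneg _, fun a => T.toContinuousLinearMap.le_opNorm a⟩
  set lam := ⟪T x, T x⟫ + ⟪u, x⟫ with hlam
  set G : E → ℝ := fun z => ⟪T x, T z⟫ + ⟪u, z⟫ - lam * ⟪x, z⟫ with hG
  have hxx : ⟪x, x⟫ = 1 := by rw [real_inner_self_eq_norm_sq, hx]; norm_num
  have Gsmul : ∀ (c : ℝ) (a : E), G (c • a) = c * G a := by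
    intro c a
    simp only [hG, map_smul, real_inner_smul_right]
    ring
  have Gadd : ∀ a b : E, G (a + b) = G a + G b := by
    intro a b
    simp only [hG, map_add, inner_add_right]
    ring
  have Gx : G x = 0 := by simp only [hG, hxx]; ring
  have Gperp : ∀ z : E, ⟪x, z⟫ = 0 → ‖z‖ = 1 → G z = 0 := by
    have main : ∀ w : E, ⟪x, w⟫ = 0 → ‖w‖ = 1 → ∀ t : ℝ, 0 < t → t ≤ 1 →
        -(G w) ≤ (|lam| + C^2) * t := by
      intro w hwx hw1 t ht0 ht1
      set s := Real.sqrt (1 - t^2) - 1 with hs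
      have h1t : 0 ≤ 1 - t^2 := by nlinarith
      have h1s : 1 + s = Real.sqrt (1 - t^2) := by rw [hs]; ring
      have hsq : (1 + s) ^ 2 = 1 - t^2 := by rw [h1s, Real.sq_sqrt h1t]
      have hr1 : Real.sqrt (1 - t^2) ≤ 1 := Real.sqrt_le_one.mpr (by nlinarith)
      have hs0 : s ≤ 0 := by rw [hs]; linarith
      have hsge : -s ≤ t^2 := by
        have h2 : 1 - t^2 ≤ Real.sqrt (1 - t^2) := by
          nlinarith [Real.sq_sqrt h1t, Real.sqrt_nonneg (1 - t^2), hr1]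
        rw [hs]; linarith
      set v := t • w + s • x with hv
      have hxv : x + v = (1 + s) • x + t • w := by rw [hv, add_smul, one_smul]; abel
      have hwx' : ⟪w, x⟫ = 0 := by rw [real_inner_comm]; exact hwx
      have hn2 : ‖x + v‖^2 = 1 := by
        rw [hxv, norm_add_sq_real, real_inner_smul_left, real_inner_smul_right, hwx,
          norm_smul, norm_smul, hx, hw1]
        simp only [mul_one, mul_zero, Real.norm_eq_abs, mul_pow, sq_abs]
        nlinarith [hsq]
      have hnorm : ‖x + v‖ = 1 := by
        have hz : (‖x + v‖ - 1) * (‖x + v‖ + 1) = 0 := by linear_combination hn2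
        rcases mul_eq_zero.mp hz with h' | h'
        · linarith
        · have := norm_nonneg (x + v); linarith
      have key := keyIneq T u x hmin v hnorm
      have hGv : G v = t * G w := by
        rw [hv, Gadd, Gsmul, Gsmul, Gx]; ring
      have hxvin : ⟪x, v⟫ = s := by
        rw [hv, inner_add_right, real_inner_smul_right, real_inner_smul_right, hwx, hxx]; ring
      have hexp : ⟪T x, T v⟫ + ⟪u, v⟫ = t * G w + lam * s := by
        have hGv' : G v = ⟪T x, T v⟫ + ⟪u, v⟫ - lam * ⟪x, v⟫ := rfl
        rw [hGv, hxvin] at hGv'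
        linarith
      have hvnorm2 : ‖v‖^2 = t^2 + s^2 := by
        rw [hv, norm_add_sq_real, real_inner_smul_left, real_inner_smul_right, hwx',
          norm_smul, norm_smul, hx, hw1]
        simp only [mul_one, mul_zero, Real.norm_eq_abs, mul_pow, sq_abs]
        ring
      have hTv : ⟪T v, T v⟫ ≤ C^2 * (t^2 + s^2) := by
        have h5 : ‖T v‖ ≤ C * ‖v‖ := hCb v
        have h6 : ⟪T v, T v⟫ = ‖T v‖^2 := real_inner_self_eq_norm_sq _
        have h7 : ‖T v‖^2 ≤ (C * ‖v‖)^2 := by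
          have := norm_nonneg (T v)
          nlinarith
        rw [h6]
        calc ‖T v‖^2 ≤ (C * ‖v‖)^2 := h7
          _ = C^2 * ‖v‖^2 := by ring
          _ = C^2 * (t^2 + s^2) := by rw [hvnorm2]
      have hslam : lam * s ≤ |lam| * t^2 := by
        calc lam * s ≤ |lam * s| := le_abs_self _
          _ = |lam| * |s| := abs_mul lam s
          _ ≤ |lam| * t^2 := by
              have : |s| ≤ t^2 := by rw [abs_of_nonpos hs0]; linarith
              exact mul_le_mul_of_nonneg_left this (abs_nonneg lam)
      have hst : s^2 ≤ t^2 := by nlinarith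
      rw [hexp] at key
      clear_value G v s lam
      have hCs : C^2 * s^2 ≤ C^2 * t^2 := mul_le_mul_of_nonneg_left hst (sq_nonneg C)
      have hCt : C^2 * (t^2 + s^2) = C^2 * t^2 + C^2 * s^2 := by ring
      rw [hCt] at hTv
      have habs : |lam| * t^2 + C^2 * t^2 = (|lam| + C^2) * t^2 := by ring
      have hfin : -(t * G w) ≤ (|lam| + C^2) * t^2 := by
        rw [← habs]; linarith [key, hTv, hslam, hCs]
      have ht2 : (|lam| + C^2) * t^2 ≤ ((|lam| + C^2) * t) * t := by ring_nf; rfl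
      have habs0 : 0 ≤ |lam| + C^2 := by positivity
      nlinarith [hfin]
    intro z hzx hz1
    have h1 : -(G z) ≤ 0 := by
      apply aux_le_zero _ (|lam| + C^2) (by positivity)
      intro t ht0 ht1
      exact main z hzx hz1 t ht0 ht1
    have h2 : G z ≤ 0 := by
      apply aux_le_zero _ (|lam| + C^2) (by positivity)
      intro t ht0 ht1
      have hm := main (-z) (by rw [inner_neg_right, hzx]; ring) (by rw [norm_neg, hz1]) t ht0 ht1
      have hneg : G (-z) = -(G z) := by
        have := Gsmul (-1) z
        simpa using this
      rw [hneg] at hm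
      linarith
    linarith
  intro z
  have main : G z = 0 := by
    set c := ⟪x, z⟫ with hc
    set w := z - c • x with hw
    have hxw : ⟪x, w⟫ = 0 := by
      rw [hw, inner_sub_right, real_inner_smul_right, hxx]; ring
    have hzdecomp : z = c • x + w := by rw [hw]; abel
    have hGw : G w = 0 := by
      by_cases hw0 : w = 0
      · rw [hw0]
        have := Gsmul 0 0
        simpa using this
      · have hwn : ‖w‖ ≠ 0 := norm_ne_zero_iff.mpr hw0
        have hunit : ‖(‖w‖⁻¹ : ℝ) • w‖ = 1 := by
          rw [norm_smul, norm_inv, norm_norm]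
          field_simp
        have hperp : ⟪x, (‖w‖⁻¹ : ℝ) • w⟫ = 0 := by
          rw [real_inner_smul_right, hxw]; ring
        have h0 := Gperp _ hperp hunit
        rw [Gsmul] at h0
        rcases mul_eq_zero.mp h0 with h' | h'
        · exact absurd (inv_eq_zero.mp h') hwn
        · exact h'
    calc G z = G (c • x + w) := by rw [← hzdecomp]
      _ = c * G x + G w := by rw [Gadd, Gsmul]
      _ = 0 := by rw [Gx, hGw]; ring
  have hfin : ⟪T x, T z⟫ + ⟪u, z⟫ - lam * ⟪x, z⟫ = 0 := main
  linarith

lemma secondOrder (T : E →ₗ[ℝ] F) (u x : E) (hx : ‖x‖ = 1)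
    (hmin : ∀ y, ‖y‖ = 1 → (1/2)*‖T x‖^2 + ⟪u,x⟫ ≤ (1/2)*‖T y‖^2 + ⟪u,y⟫) :
    ∀ z : E, (⟪T x, T x⟫ + ⟪u, x⟫) * ⟪z, z⟫ ≤ ⟪T z, T z⟫ := by
  have hFO := firstOrder T u x hx hmin
  set lam := ⟪T x, T x⟫ + ⟪u, x⟫ with hlam
  have hxx : ⟪x, x⟫ = 1 := by rw [real_inner_self_eq_norm_sq, hx]; norm_num
  have case1 : ∀ z : E, ⟪x, z⟫ ≠ 0 → lam * ⟪z, z⟫ ≤ ⟪T z, T z⟫ := by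
    intro z hz
    have hz0 : z ≠ 0 := by
      intro h0; rw [h0, inner_zero_right] at hz; exact hz rfl
    have hzz : (0:ℝ) < ⟪z, z⟫ := by
      rw [real_inner_self_eq_norm_sq]
      exact pow_pos (norm_pos_iff.mpr hz0) 2
    set t := -2 * ⟪x, z⟫ / ⟪z, z⟫ with ht
    have hts : t * ⟪z, z⟫ = -2 * ⟪x, z⟫ := div_mul_cancel₀ _ (ne_of_gt hzz)
    have htne : t ≠ 0 := by
      rw [ht]
      exact div_ne_zero (by simpa using hz) (ne_of_gt hzz)
    set v := t • z with hv
    have hn2 : ‖x + v‖^2 = 1 := by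
      rw [hv, norm_add_sq_real, real_inner_smul_right, norm_smul, hx]
      have hnz : ‖z‖^2 = ⟪z, z⟫ := (real_inner_self_eq_norm_sq z).symm
      simp only [Real.norm_eq_abs, mul_pow, sq_abs]
      rw [hnz]
      linear_combination t * hts
    have hnorm : ‖x + v‖ = 1 := by
      have hfz : (‖x + v‖ - 1) * (‖x + v‖ + 1) = 0 := by linear_combination hn2
      rcases mul_eq_zero.mp hfz with h' | h'
      · linarith
      · have := norm_nonneg (x + v); linarith
    have key := keyIneq T u x hmin v hnorm
    have hFOv := hFO v
    have hxv : ⟪x, v⟫ = t * ⟪x, z⟫ := by rw [hv, real_inner_smul_right]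
    have hTvv : ⟪T v, T v⟫ = t^2 * ⟪T z, T z⟫ := by
      rw [hv, map_smul, real_inner_smul_left, real_inner_smul_right]; ring
    have hxv2 : ⟪x, v⟫ = -(1/2) * (t^2 * ⟪z, z⟫) := by
      rw [hxv]
      have : t^2 * ⟪z, z⟫ = t * (t * ⟪z, z⟫) := by ring
      rw [this, hts]; ring
    rw [hFOv, hxv2, hTvv] at key
    have ht2 : 0 < t * t := mul_self_pos.mpr htne
    clear_value lam t
    nlinarith [key, ht2]
  intro z
  by_cases hxz : ⟪x, z⟫ = 0
  · have hzx' : ⟪z, x⟫ = 0 := by rw [real_inner_comm]; exact hxz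
    have expand : ∀ ε : ℝ, ε ≠ 0 →
        lam * (⟪z, z⟫ + ε^2) ≤ ⟪T z, T z⟫ + 2*(ε*⟪T z, T x⟫) + ε^2*⟪T x, T x⟫ := by
      intro ε hε
      have h1 : ⟪x, z + ε • x⟫ = ε := by
        rw [inner_add_right, real_inner_smul_right, hxz, hxx]; ring
      have h2 := case1 (z + ε • x) (by rw [h1]; exact hε)
      have h3 : ⟪z + ε • x, z + ε • x⟫ = ⟪z, z⟫ + ε^2 := by
        rw [real_inner_add_add_self]
        simp only [real_inner_smul_left, real_inner_smul_right, hzx', hxx]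
        ring
      have h4 : ⟪T (z + ε • x), T (z + ε • x)⟫
          = ⟪T z, T z⟫ + 2*(ε*⟪T z, T x⟫) + ε^2*⟪T x, T x⟫ := by
        rw [map_add, map_smul, real_inner_add_add_self]
        simp only [real_inner_smul_left, real_inner_smul_right]
        ring
      rw [h3, h4] at h2
      exact h2
    have hc : lam * ⟪z, z⟫ - ⟪T z, T z⟫ ≤ 0 := by
      apply aux_le_zero _ |⟪T x, T x⟫ - lam| (abs_nonneg _)
      intro ε hε0 hε1
      have e1 := expand ε (ne_of_gt hε0)
      have e2 := expand (-ε) (by intro h0; linarith [neg_eq_zero.mp h0])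
      clear_value lam
      have h5 : lam * ⟪z, z⟫ - ⟪T z, T z⟫ ≤ ε^2 * (⟪T x, T x⟫ - lam) := by nlinarith [e1, e2]
      have h6 : ε^2 * (⟪T x, T x⟫ - lam) ≤ ε * |⟪T x, T x⟫ - lam| := by
        have a1 : (0:ℝ) ≤ ε - ε^2 := by nlinarith
        have a2 : (0:ℝ) ≤ |⟪T x, T x⟫ - lam| - (⟪T x, T x⟫ - lam) :=
          by linarith [le_abs_self (⟪T x, T x⟫ - lam)]
        nlinarith [mul_nonneg a1 (abs_nonneg (⟪T x, T x⟫ - lam)), mul_nonneg (sq_nonneg ε) a2]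
      linarith
    linarith
  · exact case1 z hxz

lemma sphere_min_structure [Nontrivial E] (T : E →ₗ[ℝ] F) (u : E) :
    ∃ (p : E) (V : Submodule ℝ E) (r : ℝ), 0 ≤ r ∧
      {x : E | ‖x‖ = 1 ∧ ∀ y, ‖y‖ = 1 → (1/2)*‖T x‖^2 + ⟪u,x⟫ ≤ (1/2)*‖T y‖^2 + ⟪u,y⟫}
        = {x : E | ∃ w ∈ V, ‖w‖ = r ∧ x = p + w} := by
  -- existence of a minimizer
  have hsne : (Metric.sphere (0:E) 1).Nonempty := NormedSpace.sphere_nonempty.mpr zero_le_one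
  have hfc : Continuous (fun x : E => (1/2)*‖T x‖^2 + ⟪u,x⟫) := by
    have hT : Continuous T := T.continuous_of_finiteDimensional
    exact (continuous_const.mul ((hT.norm).pow 2)).add (continuous_const.inner continuous_id)
  obtain ⟨x₀, hx₀mem, hx₀min⟩ := (isCompact_sphere (0:E) 1).exists_isMinOn hsne hfc.continuousOn
  rw [mem_sphere_zero_iff_norm] at hx₀mem
  have hmin : ∀ y, ‖y‖ = 1 → (1/2)*‖T x₀‖^2 + ⟪u,x₀⟫ ≤ (1/2)*‖T y‖^2 + ⟪u,y⟫ := by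
    intro y hy
    exact hx₀min (mem_sphere_zero_iff_norm.mpr hy)
  have hSO := secondOrder T u x₀ hx₀mem hmin
  have hFO0 := firstOrder T u x₀ hx₀mem hmin
  obtain ⟨lam, hlam⟩ : ∃ l : ℝ, l = ⟪T x₀, T x₀⟫ + ⟪u, x₀⟫ := ⟨_, rfl⟩
  rw [← hlam] at hSO hFO0
  set M : E →ₗ[ℝ] E := ((LinearMap.adjoint T) ∘ₗ T) - lam • LinearMap.id with hM
  have hMz : ∀ z w : E, ⟪M z, w⟫ = ⟪T z, T w⟫ - lam * ⟪z, w⟫ := by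
    intro z w
    rw [hM]
    simp only [LinearMap.sub_apply, LinearMap.comp_apply, LinearMap.smul_apply,
      LinearMap.id_apply, inner_sub_left, real_inner_smul_left, LinearMap.adjoint_inner_left]
  -- characterization of minimizers
  have hchar : ∀ x : E,
      (‖x‖ = 1 ∧ ∀ y, ‖y‖ = 1 → (1/2)*‖T x‖^2 + ⟪u,x⟫ ≤ (1/2)*‖T y‖^2 + ⟪u,y⟫)
      ↔ (‖x‖ = 1 ∧ M x = -u) := by
    intro x
    constructor
    · rintro ⟨hx1, hxmin⟩
      refine ⟨hx1, ?_⟩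
      have hFOx := firstOrder T u x hx1 hxmin
      obtain ⟨lamx, hlamx⟩ : ∃ l : ℝ, l = ⟪T x, T x⟫ + ⟪u, x⟫ := ⟨_, rfl⟩
      rw [← hlamx] at hFOx
      have hfeq : (1/2)*‖T x‖^2 + ⟪u,x⟫ = (1/2)*‖T x₀‖^2 + ⟪u,x₀⟫ :=
        le_antisymm (hxmin x₀ hx₀mem) (hmin x hx1)
      have ha : ⟪T x, T x⟫ = ‖T x‖^2 := real_inner_self_eq_norm_sq _
      have ha0 : ⟪T x₀, T x₀⟫ = ‖T x₀‖^2 := real_inner_self_eq_norm_sq _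
      have e1 := hFO0 x
      have e2 := hFOx x₀
      have hcomm : ⟪T x, T x₀⟫ = ⟪T x₀, T x⟫ := real_inner_comm _ _
      have hcomm2 : ⟪x, x₀⟫ = ⟪x₀, x⟫ := real_inner_comm _ _
      rw [hcomm, hcomm2] at e2
      have d1 : lamx - lam = ⟪u,x₀⟫ - ⟪u,x⟫ := by
        rw [hlamx, hlam, ha, ha0]; linarith
      have d2 : (lam - lamx) * ⟪x₀, x⟫ = ⟪u,x⟫ - ⟪u,x₀⟫ := by
        linear_combination e2 - e1
      have hdelta : (lamx - lam) * (1 - ⟪x₀, x⟫) = 0 := by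
        linear_combination d1 + d2
      have hlamxeq : lamx = lam := by
        rcases mul_eq_zero.mp hdelta with h' | h'
        · linarith
        · have hc1 : ⟪x₀, x⟫ = 1 := by linarith
          have hxex : x = x₀ := by
            have hxx1 : ⟪x, x⟫ = 1 := by
              rw [real_inner_self_eq_norm_sq, hx1]; norm_num
            have hx00 : ⟪x₀, x₀⟫ = 1 := by
              rw [real_inner_self_eq_norm_sq, hx₀mem]; norm_num
            have hnn : ⟪x - x₀, x - x₀⟫ = 0 := by
              rw [inner_sub_left, inner_sub_right, inner_sub_right, hxx1, hx00,
                real_inner_comm x₀ x, hc1]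
              ring
            have := inner_self_eq_zero.mp hnn
            exact sub_eq_zero.mp this
          rw [hlamx, hxex]
          exact hlam.symm
      have hz : ∀ z, ⟪M x + u, z⟫ = 0 := by
        intro z
        rw [inner_add_left, hMz]
        have h5 := hFOx z
        rw [hlamxeq] at h5
        linarith
      have h0 : M x + u = 0 := inner_self_eq_zero.mp (hz (M x + u))
      exact eq_neg_of_add_eq_zero_left h0
    · rintro ⟨hx1, hMx⟩
      refine ⟨hx1, ?_⟩
      intro y hy
      set z := y - x with hzdef
      have hyz : y = x + z := by rw [hzdef]; abel
      have hcons : 2*⟪x,z⟫ + ⟪z,z⟫ = 0 := constraintEq x z hx1 (by rw [← hyz]; exact hy)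
      have hfo : ⟪T x, T z⟫ + ⟪u, z⟫ = lam * ⟪x, z⟫ := by
        have hh := hMz x z
        rw [hMx, inner_neg_left] at hh
        linarith
      have hq := hSO z
      have hTy : ‖T y‖^2 = ‖T x‖^2 + 2*⟪T x,T z⟫ + ‖T z‖^2 := by
        rw [hyz, map_add]; exact norm_add_sq_real _ _
      have huy : ⟪u,y⟫ = ⟪u,x⟫ + ⟪u,z⟫ := by rw [hyz, inner_add_right]
      have hTz : ⟪T z,T z⟫ = ‖T z‖^2 := real_inner_self_eq_norm_sq _
      have hl : lam * ⟪x,z⟫ = -(1/2)*(lam*⟪z,z⟫) := by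
        linear_combination (lam/2) * hcons
      rw [hTy, huy]
      linarith [hfo, hl, hq, hTz]
  -- the affine structure
  have hx₀minpair : ‖x₀‖ = 1 ∧ M x₀ = -u := (hchar x₀).mp ⟨hx₀mem, hmin⟩
  have hMx₀ : M x₀ = -u := hx₀minpair.2
  set V := LinearMap.ker M with hV
  set w₀ : E := (V.orthogonalProjectionOnto x₀ : E) with hw₀
  set p := x₀ - w₀ with hp
  have hporth : p ∈ Vᗮ := V.sub_starProjection_mem_orthogonal x₀
  have hpw : ∀ w ∈ V, ⟪p, w⟫ = 0 := by
    intro w hw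
    rw [real_inner_comm]
    exact hporth w hw
  have hw₀V : w₀ ∈ V := (V.orthogonalProjectionOnto x₀).2
  have hMw₀ : M w₀ = 0 := LinearMap.mem_ker.mp hw₀V
  have hMp : M p = -u := by rw [hp, map_sub, hMx₀, hMw₀]; abel
  have hx₀pw : x₀ = p + w₀ := by rw [hp]; abel
  have hnormsplit : ∀ w ∈ V, ‖p + w‖^2 = ‖p‖^2 + ‖w‖^2 := by
    intro w hw
    rw [norm_add_sq_real, hpw w hw]; ring
  have hple : ‖p‖^2 ≤ 1 := by
    have hh := hnormsplit w₀ hw₀V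
    rw [← hx₀pw, hx₀mem] at hh
    nlinarith [sq_nonneg ‖w₀‖]
  set r := Real.sqrt (1 - ‖p‖^2) with hr
  have hr0 : 0 ≤ r := Real.sqrt_nonneg _
  have hr2 : r^2 = 1 - ‖p‖^2 := Real.sq_sqrt (by linarith)
  refine ⟨p, V, r, hr0, ?_⟩
  ext x
  simp only [Set.mem_setOf_eq]
  rw [hchar x]
  constructor
  · rintro ⟨hx1, hMx⟩
    have hwV : x - p ∈ V := by
      rw [hV, LinearMap.mem_ker, map_sub, hMx, hMp]
      abel
    refine ⟨x - p, hwV, ?_, by abel⟩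
    have hsp := hnormsplit (x - p) hwV
    rw [show p + (x - p) = x by abel, hx1] at hsp
    have h1 : ‖x - p‖^2 = r^2 := by rw [hr2]; nlinarith [hsp]
    rw [← Real.sqrt_sq (norm_nonneg (x - p)), h1, Real.sqrt_sq hr0]
  · rintro ⟨w, hwV, hwr, rfl⟩
    have hsp := hnormsplit w hwV
    rw [hwr, hr2] at hsp
    have h2 : ‖p + w‖^2 = 1 := by rw [hsp]; ring
    constructor
    · rw [← Real.sqrt_sq (norm_nonneg (p + w)), h2, Real.sqrt_one]
    · rw [map_add, hMp, LinearMap.mem_ker.mp hwV]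
      abel

end Aux

/-- The set `X*_u` of global minimizers of `x ↦ L(x,u)` over the Euclidean unit sphere
is a (possibly degenerate) sphere: there are a point `p`, a linear subspace `V`, and a
radius `r ≥ 0` such that `X*_u = {p + w : w ∈ V, ‖w‖ = r}`. -/
theorem minimizer_set_is_sphere (d n : ℕ) (hd : 1 ≤ d) (hn : 1 ≤ n)
    (A : Matrix (Fin d) (Fin n) ℝ) (u : EuclideanSpace ℝ (Fin n)) :
    ∃ (p : EuclideanSpace ℝ (Fin n)) (V : Submodule ℝ (EuclideanSpace ℝ (Fin n))) (r : ℝ),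
      0 ≤ r ∧
      {x : EuclideanSpace ℝ (Fin n) | ‖x‖ = 1 ∧
          ∀ y : EuclideanSpace ℝ (Fin n), ‖y‖ = 1 → lagrangian A x u ≤ lagrangian A y u}
        = {x : EuclideanSpace ℝ (Fin n) | ∃ w ∈ V, ‖w‖ = r ∧ x = p + w} := by
  haveI : Nonempty (Fin n) := ⟨⟨0, hn⟩⟩
  obtain ⟨p, V, r, hr, hset⟩ := sphere_min_structure (Matrix.toEuclideanLin A) u
  refine ⟨p, V, r, hr, ?_⟩
  simp only [lagrangian]
  exact hset
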